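/- With v(p) = ∑_{k≥0} ((k−1)/(k+1)) p_k(p) (1 − q_p^{k+1})/(1 − q_p²), the expansion (1 + q_p)·v(p) = m₁(p − p_c) − (1/2)(1 − q_p)p²m₂ + (1/6)(1 − q_p)²(p³m₃ + p²m₂) + o((1 − q_p)²) holds as p decreases to p_c; equivalently, [(1 + q_p)v(p) − m₁(p − p_c) + (1/2)(1 − q_p)p²m₂ − (1/6)(1 − q_p)²(p³m₃ + p²m₂)]/(1 − q_p)² → 0 as p → p_c from the right. -/

import Mathlib

open Filter Set Topology
open scoped Topology

/-- The probability generating function `f(s) = ∑ₖ aₖ sᵏ` of a distribution `a` on ℕ. -/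
noncomputable def pgf (a : ℕ → ℝ) (s : ℝ) : ℝ := ∑' n, a n * s ^ n

/-- The binomially `p`-thinned offspring probabilities
`p_k(p) = ∑_{n ≥ k} C(n,k) pᵏ (1-p)^{n-k} p_n`. -/
noncomputable def thinned (a : ℕ → ℝ) (p : ℝ) (k : ℕ) : ℝ :=
  ∑' n, if k ≤ n then (n.choose k : ℝ) * p ^ k * (1 - p) ^ (n - k) * a n else 0

/-- The generating function `f_p(s) = f(ps + 1 - p)` of the binomially `p`-thinned
(percolated) offspring distribution. -/
noncomputable def pgfp (a : ℕ → ℝ) (p s : ℝ) : ℝ := pgf a (p * s + 1 - p)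

/-- The Lyons–Pemantle–Peres effective speed
`v(p) = ∑ₖ ((k-1)/(k+1)) p_k(p) (1 - q_p^{k+1})/(1 - q_p²)`. -/
noncomputable def speedLPP (a : ℕ → ℝ) (q : ℝ → ℝ) (p : ℝ) : ℝ :=
  ∑' k : ℕ, (((k : ℝ) - 1) / ((k : ℝ) + 1)) * thinned a p k *
    ((1 - q p ^ (k + 1)) / (1 - q p ^ 2))

namespace SpeedAux

open Finset

/-! ### Elementary polynomial bounds for `(1-u)^k` -/

/-- Taylor remainder `e k u = 1 - k u + C(k,2)u² - (1-u)^k`. -/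
noncomputable def eF (k : ℕ) (u : ℝ) : ℝ :=
  1 - k * u + k * (k - 1) / 2 * u ^ 2 - (1 - u) ^ k

lemma bern (k : ℕ) {u : ℝ} (h0 : 0 ≤ u) (h1 : u ≤ 1) : 1 - k * u ≤ (1 - u) ^ k := by
  induction k with
  | zero => simp
  | succ k ih =>
    have h2 : (0:ℝ) ≤ 1 - u := by linarith
    have h3 : (1 - u) ^ (k+1) = (1-u)^k * (1-u) := by ring
    have h4 : ((k:ℝ)+1) = ((k+1:ℕ):ℝ) := by push_cast; ring
    rw [h3, ← h4]
    nlinarith [mul_nonneg (Nat.cast_nonneg (α := ℝ) k) (mul_nonneg h0 h0)]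

lemma c_le (k : ℕ) {u : ℝ} (h0 : 0 ≤ u) (h1 : u ≤ 1) : 1 - (1 - u) ^ k ≤ k * u := by
  have := bern k h0 h1; linarith

lemma pow_le_one'' (k : ℕ) {u : ℝ} (h0 : 0 ≤ u) (h1 : u ≤ 1) : (1-u)^k ≤ 1 :=
  pow_le_one₀ (by linarith) (by linarith)

lemma c_nonneg (k : ℕ) {u : ℝ} (h0 : 0 ≤ u) (h1 : u ≤ 1) : 0 ≤ 1 - (1 - u) ^ k := by
  have := pow_le_one'' k h0 h1; linarith

lemma c_lower (k : ℕ) {u : ℝ} (h0 : 0 ≤ u) (h1 : u ≤ 1) :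
    k * u - k * (k - 1) / 2 * u ^ 2 ≤ 1 - (1 - u) ^ k := by
  induction k with
  | zero => simp
  | succ k ih =>
    have h3 : (1 - u) ^ (k+1) = (1-u)^k - u * (1-u)^k := by ring
    have hb := bern k h0 h1
    push_cast
    rw [h3]
    nlinarith [mul_nonneg (Nat.cast_nonneg (α := ℝ) k) (mul_nonneg h0 h0)]

lemma d_nonneg (k : ℕ) {u : ℝ} (h0 : 0 ≤ u) (h1 : u ≤ 1) :
    0 ≤ (1 - u) ^ k - 1 + k * u := by have := bern k h0 h1; linarith

lemma d_le (k : ℕ) {u : ℝ} (h0 : 0 ≤ u) (h1 : u ≤ 1) :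
    (1 - u) ^ k - 1 + k * u ≤ k * (k - 1) / 2 * u ^ 2 := by
  induction k with
  | zero => simp
  | succ k ih =>
    have h3 : (1 - u) ^ (k+1) = (1-u)^k - u * (1-u)^k := by ring
    have hc := c_le k h0 h1
    push_cast
    rw [h3]
    nlinarith

lemma d_lower (k : ℕ) {u : ℝ} (h0 : 0 ≤ u) (h1 : u ≤ 1) :
    k * (k - 1) / 2 * u ^ 2 - k * (k - 1) * (k - 2) / 6 * u ^ 3
      ≤ (1 - u) ^ k - 1 + k * u := by
  induction k with
  | zero => simp
  | succ k ih =>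
    have h3 : (1 - u) ^ (k+1) = (1-u)^k - u * (1-u)^k := by ring
    have hc := c_lower k h0 h1
    have hc2 := c_nonneg k h0 h1
    push_cast
    rw [h3]
    nlinarith [mul_nonneg h0 (mul_nonneg h0 (mul_nonneg h0 h0))]

lemma d_ge_sq (k : ℕ) {u : ℝ} (h0 : 0 ≤ u) (h1 : u ≤ 1) :
    u ^ 2 ≤ (1 - u) ^ (k + 2) - 1 + (k + 2) * u := by
  induction k with
  | zero => push_cast; nlinarith
  | succ k ih =>
    have h3 : (1 - u) ^ (k+3) = (1-u)^(k+2) - u * (1-u)^(k+2) := by ring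
    have hc := c_nonneg (k+2) h0 h1
    push_cast at ih ⊢
    rw [h3]
    nlinarith

lemma e_nonneg (k : ℕ) {u : ℝ} (h0 : 0 ≤ u) (h1 : u ≤ 1) : 0 ≤ eF k u := by
  induction k with
  | zero => simp [eF]
  | succ k ih =>
    have hd := d_nonneg k h0 h1
    have h3 : (1 - u) ^ (k+1) = (1-u)^k - u * (1-u)^k := by ring
    simp only [eF] at ih ⊢
    push_cast
    rw [h3]
    nlinarith

lemma e_le (k : ℕ) {u : ℝ} (h0 : 0 ≤ u) (h1 : u ≤ 1) :
    eF k u ≤ k * (k - 1) * (k - 2) / 6 * u ^ 3 := by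
  induction k with
  | zero => simp [eF]
  | succ k ih =>
    have hd := d_le k h0 h1
    have h3 : (1 - u) ^ (k+1) = (1-u)^k - u * (1-u)^k := by ring
    simp only [eF] at ih ⊢
    push_cast
    rw [h3]
    nlinarith

lemma e_lower (k : ℕ) {u : ℝ} (h0 : 0 ≤ u) (h1 : u ≤ 1) :
    k * (k - 1) * (k - 2) / 6 * u ^ 3 - k * (k - 1) * (k - 2) * (k - 3) / 24 * u ^ 4
      ≤ eF k u := by
  induction k with
  | zero => simp [eF]
  | succ k ih =>
    have hd := d_lower k h0 h1
    have h3 : (1 - u) ^ (k+1) = (1-u)^k - u * (1-u)^k := by ring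
    simp only [eF] at ih ⊢
    push_cast
    rw [h3]
    nlinarith [mul_nonneg (mul_nonneg h0 h0) (mul_nonneg (mul_nonneg h0 h0) h0)]

lemma c2_nonneg (k : ℕ) : 0 ≤ (k:ℝ) * ((k:ℝ)-1) := by
  rcases Nat.lt_or_ge k 1 with h|h
  · interval_cases k <;> norm_num
  · have : (1:ℝ) ≤ k := by exact_mod_cast h
    nlinarith

lemma c3_nonneg (k : ℕ) : 0 ≤ (k:ℝ) * ((k:ℝ)-1) * ((k:ℝ)-2) := by
  rcases Nat.lt_or_ge k 2 with h|h
  · interval_cases k <;> norm_num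
  · have h2 : (2:ℝ) ≤ k := by exact_mod_cast h
    have h3 : (0:ℝ) ≤ (k:ℝ)-2 := by linarith
    have h4 : (0:ℝ) ≤ (k:ℝ)-1 := by linarith
    exact mul_nonneg (mul_nonneg (by positivity) h4) h3

/-! ### Expansions of the generating function and its primitive -/

variable {a : ℕ → ℝ} {m₁ m₂ m₃ : ℝ}

lemma summable_ae (ha0 : ∀ k, 0 ≤ a k)
    (hm3 : HasSum (fun k : ℕ => (k : ℝ) * ((k : ℝ) - 1) * ((k : ℝ) - 2) * a k) m₃)
    {u : ℝ} (h0 : 0 ≤ u) (h1 : u ≤ 1) :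
    Summable (fun k => a k * eF k u) := by
  refine Summable.of_nonneg_of_le
    (fun k => mul_nonneg (ha0 k) (e_nonneg k h0 h1)) (fun k => ?_)
    (hm3.summable.mul_right (u^3/6))
  calc a k * eF k u ≤ a k * ((k:ℝ) * ((k:ℝ)-1) * ((k:ℝ)-2) / 6 * u ^ 3) :=
        mul_le_mul_of_nonneg_left (e_le k h0 h1) (ha0 k)
    _ = ((k : ℝ) * ((k:ℝ)-1) * ((k:ℝ)-2) * a k) * (u^3/6) := by ring

lemma summable_ae' (ha0 : ∀ k, 0 ≤ a k)
    (hm2 : HasSum (fun k : ℕ => (k : ℝ) * ((k : ℝ) - 1) * a k) m₂)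
    {u : ℝ} (h0 : 0 ≤ u) (h1 : u ≤ 1) :
    Summable (fun k : ℕ => a k * eF (k+1) u / ((k:ℝ)+1)) := by
  refine Summable.of_nonneg_of_le
    (fun k => div_nonneg (mul_nonneg (ha0 k) (e_nonneg (k+1) h0 h1)) (by positivity))
    (fun k => ?_) (hm2.summable.mul_right (u^3/6))
  · have hk : (0:ℝ) < (k:ℝ)+1 := by positivity
    have h := e_le (k+1) h0 h1
    push_cast at h
    rw [div_le_iff₀ hk]
    calc a k * eF (k+1) u ≤ a k * (((k:ℝ)+1) * (((k:ℝ)+1)-1) * (((k:ℝ)+1)-2) / 6 * u ^ 3) :=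
          mul_le_mul_of_nonneg_left h (ha0 k)
      _ = ((k : ℝ) * ((k:ℝ)-1) * a k) * (u^3/6) * ((k:ℝ)+1) := by ring

/-- `f(1-u) = 1 - m₁ u + (m₂/2)u² - D(u)` as a `HasSum`. -/
lemma pgf_expand (ha0 : ∀ k, 0 ≤ a k) (ha1 : HasSum a 1)
    (hm1 : HasSum (fun k : ℕ => (k : ℝ) * a k) m₁)
    (hm2 : HasSum (fun k : ℕ => (k : ℝ) * ((k : ℝ) - 1) * a k) m₂)
    (hm3 : HasSum (fun k : ℕ => (k : ℝ) * ((k : ℝ) - 1) * ((k : ℝ) - 2) * a k) m₃)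
    {u : ℝ} (h0 : 0 ≤ u) (h1 : u ≤ 1) :
    HasSum (fun k => a k * (1-u) ^ k)
      (1 - m₁ * u + m₂ / 2 * u ^ 2 - ∑' k, a k * eF k u) := by
  have h4 := (summable_ae ha0 hm3 h0 h1).hasSum
  have h := ((ha1.sub (hm1.mul_right u)).add (hm2.mul_right (u^2/2))).sub h4
  have h5 : m₂ * (u^2/2) = m₂/2 * u^2 := by ring
  rw [h5] at h
  convert h using 2 with k
  · rfl
  simp only [eF]; ring

/-- `∑ aₙ (1-(1-u)^{n+1})/(n+1) = u - (m₁/2)u² + E(u)` as a `HasSum`. -/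
lemma pgf_int_expand (ha0 : ∀ k, 0 ≤ a k) (ha1 : HasSum a 1)
    (hm1 : HasSum (fun k : ℕ => (k : ℝ) * a k) m₁)
    (hm2 : HasSum (fun k : ℕ => (k : ℝ) * ((k : ℝ) - 1) * a k) m₂)
    {u : ℝ} (h0 : 0 ≤ u) (h1 : u ≤ 1) :
    HasSum (fun n : ℕ => a n * ((1 - (1-u) ^ (n+1)) / ((n:ℝ)+1)))
      (u - m₁ / 2 * u ^ 2 + ∑' n : ℕ, a n * eF (n+1) u / ((n:ℝ)+1)) := by
  have h4 := (summable_ae' ha0 hm2 h0 h1).hasSum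
  have h := ((ha1.mul_right u).sub (hm1.mul_right (u^2/2))).add h4
  have h5 : m₁ * (u^2/2) = m₁/2 * u^2 := by ring
  rw [h5, one_mul] at h
  convert h using 2 with n
  · rfl
  have hn : ((n:ℝ)+1) ≠ 0 := by positivity
  have he : eF (n+1) u = 1 - ((n:ℝ)+1)*u + ((n:ℝ)+1)*(n:ℝ)/2*u^2 - (1-u)^(n+1) := by
    simp only [eF]; push_cast; ring
  field_simp
  rw [he]; ring

/-! ### Limits of the remainder terms -/

lemma Ioo_mem : Ioo (0:ℝ) 1 ∈ 𝓝[>] (0:ℝ) :=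
  Ioo_mem_nhdsGT_of_mem ⟨le_refl 0, zero_lt_one⟩

/-- per-k limit: `eF k u / u³ → C(k,3)` as `u → 0⁺`. -/
lemma e_div_lim (k : ℕ) :
    Tendsto (fun u : ℝ => eF k u / u ^ 3) (𝓝[>] 0)
      (𝓝 ((k:ℝ) * ((k:ℝ)-1) * ((k:ℝ)-2) / 6)) := by
  apply tendsto_of_tendsto_of_tendsto_of_le_of_le'
    (g := fun u : ℝ => (k:ℝ) * ((k:ℝ)-1) * ((k:ℝ)-2) / 6
      - (k:ℝ) * ((k:ℝ)-1) * ((k:ℝ)-2) * ((k:ℝ)-3) / 24 * u)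
    (h := fun _ : ℝ => (k:ℝ) * ((k:ℝ)-1) * ((k:ℝ)-2) / 6)
  · have h : Tendsto (fun u : ℝ => (k:ℝ) * ((k:ℝ)-1) * ((k:ℝ)-2) / 6
      - (k:ℝ) * ((k:ℝ)-1) * ((k:ℝ)-2) * ((k:ℝ)-3) / 24 * u) (𝓝 0)
      (𝓝 ((k:ℝ) * ((k:ℝ)-1) * ((k:ℝ)-2) / 6)) := by
      have := (tendsto_const_nhds (x := (k:ℝ) * ((k:ℝ)-1) * ((k:ℝ)-2) / 6)
        (f := 𝓝 (0:ℝ))).sub ((tendsto_id (x := 𝓝 (0:ℝ))).const_mul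
          ((k:ℝ) * ((k:ℝ)-1) * ((k:ℝ)-2) * ((k:ℝ)-3) / 24))
      simpa using this
    exact h.mono_left nhdsWithin_le_nhds
  · exact tendsto_const_nhds
  · filter_upwards [Ioo_mem] with u hu
    have h3 : (0:ℝ) < u ^ 3 := pow_pos hu.1 3
    rw [le_div_iff₀ h3]
    have := e_lower k hu.1.le hu.2.le
    nlinarith
  · filter_upwards [Ioo_mem] with u hu
    have h3 : (0:ℝ) < u ^ 3 := pow_pos hu.1 3
    rw [div_le_iff₀ h3]
    have := e_le k hu.1.le hu.2.le
    nlinarith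

/-- `D(u)/u³ → m₃/6` as `u → 0⁺`. -/
lemma D_lim (ha0 : ∀ k, 0 ≤ a k)
    (hm3 : HasSum (fun k : ℕ => (k : ℝ) * ((k : ℝ) - 1) * ((k : ℝ) - 2) * a k) m₃) :
    Tendsto (fun u : ℝ => (∑' k : ℕ, a k * eF k u) / u ^ 3) (𝓝[>] 0) (𝓝 (m₃/6)) := by
  have key : Tendsto (fun u : ℝ => ∑' k : ℕ, a k * eF k u / u ^ 3) (𝓝[>] 0)
      (𝓝 (∑' k : ℕ, a k * ((k:ℝ) * ((k:ℝ)-1) * ((k:ℝ)-2) / 6))) := by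
    apply tendsto_tsum_of_dominated_convergence
      (bound := fun k : ℕ => (k:ℝ) * ((k:ℝ)-1) * ((k:ℝ)-2) * a k / 6)
    · exact hm3.summable.div_const 6
    · intro k
      have := (e_div_lim k).const_mul (a k)
      simpa [mul_div_assoc] using this
    · filter_upwards [Ioo_mem] with u hu k
      have h3 : (0:ℝ) < u ^ 3 := pow_pos hu.1 3
      have hnn : 0 ≤ a k * eF k u / u ^ 3 :=
        div_nonneg (mul_nonneg (ha0 k) (e_nonneg k hu.1.le hu.2.le)) h3.le
      rw [Real.norm_eq_abs, abs_of_nonneg hnn, div_le_iff₀ h3]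
      have := mul_le_mul_of_nonneg_left (e_le k hu.1.le hu.2.le) (ha0 k)
      calc a k * eF k u ≤ a k * ((k:ℝ) * ((k:ℝ)-1) * ((k:ℝ)-2) / 6 * u ^ 3) := this
        _ = (k:ℝ) * ((k:ℝ)-1) * ((k:ℝ)-2) * a k / 6 * u ^ 3 := by ring
  have hval : (∑' k : ℕ, a k * ((k:ℝ) * ((k:ℝ)-1) * ((k:ℝ)-2) / 6)) = m₃ / 6 := by
    rw [← (hm3.div_const 6).tsum_eq]
    congr 1; funext k; ring
  rw [hval] at key
  convert key using 2 with u
  exact tsum_div_const.symm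

/-- `E(u)/u³ → m₂/6` as `u → 0⁺`. -/
lemma E_lim (ha0 : ∀ k, 0 ≤ a k)
    (hm2 : HasSum (fun k : ℕ => (k : ℝ) * ((k : ℝ) - 1) * a k) m₂) :
    Tendsto (fun u : ℝ => (∑' k : ℕ, a k * eF (k+1) u / ((k:ℝ)+1)) / u ^ 3)
      (𝓝[>] 0) (𝓝 (m₂/6)) := by
  have key : Tendsto (fun u : ℝ => ∑' k : ℕ, a k * eF (k+1) u / ((k:ℝ)+1) / u ^ 3)
      (𝓝[>] 0) (𝓝 (∑' k : ℕ, (k:ℝ) * ((k:ℝ)-1) * a k / 6)) := by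
    apply tendsto_tsum_of_dominated_convergence
      (bound := fun k : ℕ => (k:ℝ) * ((k:ℝ)-1) * a k / 6)
    · exact hm2.summable.div_const 6
    · intro k
      have hk : (0:ℝ) < (k:ℝ)+1 := by positivity
      have h := ((e_div_lim (k+1)).const_mul (a k / ((k:ℝ)+1)))
      have heq : a k / ((k:ℝ)+1) * (((k+1:ℕ):ℝ) * (((k+1:ℕ):ℝ)-1) * (((k+1:ℕ):ℝ)-2) / 6)
          = (k:ℝ) * ((k:ℝ)-1) * a k / 6 := by
        push_cast; field_simp; ring
      rw [heq] at h
      convert h using 2 with u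
      field_simp
    · filter_upwards [Ioo_mem] with u hu k
      have h3 : (0:ℝ) < u ^ 3 := pow_pos hu.1 3
      have hk : (0:ℝ) < (k:ℝ)+1 := by positivity
      have hnn : 0 ≤ a k * eF (k+1) u / ((k:ℝ)+1) / u ^ 3 :=
        div_nonneg (div_nonneg (mul_nonneg (ha0 k) (e_nonneg (k+1) hu.1.le hu.2.le)) hk.le) h3.le
      rw [Real.norm_eq_abs, abs_of_nonneg hnn, div_le_iff₀ h3, div_le_iff₀ hk]
      have hle := mul_le_mul_of_nonneg_left (e_le (k+1) hu.1.le hu.2.le) (ha0 k)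
      calc a k * eF (k+1) u
          ≤ a k * (((k+1:ℕ):ℝ) * (((k+1:ℕ):ℝ)-1) * (((k+1:ℕ):ℝ)-2) / 6 * u ^ 3) := hle
        _ = (k:ℝ) * ((k:ℝ)-1) * a k / 6 * u ^ 3 * ((k:ℝ)+1) := by push_cast; ring
  have hval : (∑' k : ℕ, (k:ℝ) * ((k:ℝ)-1) * a k / 6) = m₂ / 6 := (hm2.div_const 6).tsum_eq
  rw [hval] at key
  convert key using 2 with u
  exact tsum_div_const.symm

/-! ### Fubini for thinned sums -/

variable {p : ℝ}

lemma binom_sum (n : ℕ) (x y : ℝ) :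
    ∑ k ∈ range (n+1), (n.choose k : ℝ) * x ^ k * y ^ (n-k) = (x+y)^n := by
  rw [add_pow]
  exact Finset.sum_congr rfl fun k _ => by ring

lemma B3 (n : ℕ) {p s : ℝ} (hp : p ≠ 0) :
    ∑ k ∈ range (n+1), (n.choose k:ℝ)*p^k*(1-p)^(n-k)*((1-s^(k+1))/((k:ℝ)+1))
      = (1-(p*s+1-p)^(n+1))/(((n:ℝ)+1)*p) := by
  have hn1 : ((n:ℝ)+1) ≠ 0 := by positivity
  rw [eq_div_iff (mul_ne_zero hn1 hp)]
  rw [Finset.sum_mul]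
  have step : ∀ k ∈ range (n+1),
      (n.choose k:ℝ)*p^k*(1-p)^(n-k)*((1-s^(k+1))/((k:ℝ)+1)) * (((n:ℝ)+1)*p)
      = ((n+1).choose (k+1):ℝ)*p^(k+1)*(1-p)^((n+1)-(k+1))*(1-s^(k+1)) := by
    intro k hk
    have hcr : ((n:ℝ)+1) * (n.choose k:ℝ) = ((n+1).choose (k+1):ℝ) * ((k:ℝ)+1) := by
      exact_mod_cast Nat.add_one_mul_choose_eq n k
    have hk1 : ((k:ℝ)+1) ≠ 0 := by positivity
    have hnk : (n+1)-(k+1) = n - k := by omega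
    rw [hnk]
    field_simp
    linear_combination (p^(k+1)*(1-p)^(n-k)*(1-s^(k+1))) * hcr
  rw [Finset.sum_congr rfl step]
  have hrei := Finset.sum_range_succ'
    (fun j => ((n+1).choose j:ℝ)*p^j*(1-p)^((n+1)-j)*(1-s^j)) (n+1)
  have hg0 : ((n+1).choose 0:ℝ)*p^0*(1-p)^((n+1)-0)*(1-s^0) = 0 := by simp
  have h1 : ∑ j ∈ range (n+2), ((n+1).choose j:ℝ)*p^j*(1-p)^((n+1)-j) = 1 := by
    rw [binom_sum (n+1) p (1-p)]; norm_num
  have h2 : ∑ j ∈ range (n+2), ((n+1).choose j:ℝ)*(p*s)^j*(1-p)^((n+1)-j)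
      = (p*s+1-p)^(n+1) := by
    rw [binom_sum (n+1) (p*s) (1-p)]; ring_nf
  have hsplit : ∑ j ∈ range (n+2), ((n+1).choose j:ℝ)*p^j*(1-p)^((n+1)-j)*(1-s^j)
      = 1 - (p*s+1-p)^(n+1) := by
    calc ∑ j ∈ range (n+2), ((n+1).choose j:ℝ)*p^j*(1-p)^((n+1)-j)*(1-s^j)
        = ∑ j ∈ range (n+2), (((n+1).choose j:ℝ)*p^j*(1-p)^((n+1)-j)
            - ((n+1).choose j:ℝ)*(p*s)^j*(1-p)^((n+1)-j)) := by
          refine Finset.sum_congr rfl fun j _ => ?_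
          rw [mul_pow]; ring
      _ = 1 - (p*s+1-p)^(n+1) := by rw [Finset.sum_sub_distrib, h1, h2]
  linarith [hrei, hsplit, hg0]

/-- master Fubini lemma for thinned sums against a bounded nonneg coefficient. -/
lemma thinned_hasSum (ha0 : ∀ k, 0 ≤ a k) (ha : Summable a)
    (hp0 : 0 ≤ p) (hp1 : p ≤ 1) {c : ℕ → ℝ}
    (hc0 : ∀ k, 0 ≤ c k) (hc1 : ∀ k, c k ≤ 1) :
    HasSum (fun k => thinned a p k * c k)
      (∑' n, a n * ∑ k ∈ range (n+1), (n.choose k : ℝ) * p ^ k * (1-p) ^ (n-k) * c k) := by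
  have h1p : (0:ℝ) ≤ 1 - p := by linarith
  set f : ℕ → ℕ → ℝ := fun n k =>
    (if k ≤ n then (n.choose k : ℝ) * p ^ k * (1 - p) ^ (n - k) * a n else 0) * c k with hf
  have hnn : ∀ n k, 0 ≤ f n k := by
    intro n k
    apply mul_nonneg _ (hc0 k)
    by_cases h : k ≤ n
    · simp only [if_pos h]
      have := ha0 n; positivity
    · simp [h]
  have hzero : ∀ n, ∀ k ∉ range (n+1), f n k = 0 := by
    intro n k hk
    simp only [Finset.mem_range, not_lt] at hk
    have h : ¬ k ≤ n := by omega
    simp [hf, h]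
  have hrow : ∀ n, HasSum (f n)
      (a n * ∑ k ∈ range (n+1), (n.choose k:ℝ)*p^k*(1-p)^(n-k)*c k) := by
    intro n
    have h : HasSum (f n) (∑ k ∈ range (n+1), f n k) :=
      hasSum_sum_of_ne_finset_zero (s := range (n+1)) (f := f n) (hzero n)
    convert h using 1
    rw [Finset.mul_sum]
    refine (Finset.sum_congr rfl fun k hk => ?_).symm
    simp only [Finset.mem_range] at hk
    have hkn : k ≤ n := by omega
    simp only [hf, if_pos hkn]; ring
  have hSle : ∀ n, ∑ k ∈ range (n+1), (n.choose k:ℝ)*p^k*(1-p)^(n-k)*c k ≤ 1 := by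
    intro n
    have h2 : ∑ k ∈ range (n+1), (n.choose k:ℝ)*p^k*(1-p)^(n-k) = 1 := by
      rw [binom_sum]; simp
    calc ∑ k ∈ range (n+1), (n.choose k:ℝ)*p^k*(1-p)^(n-k)*c k
        ≤ ∑ k ∈ range (n+1), (n.choose k:ℝ)*p^k*(1-p)^(n-k) := by
          refine Finset.sum_le_sum fun k _ => ?_
          have hb : (0:ℝ) ≤ (n.choose k:ℝ)*p^k*(1-p)^(n-k) := by positivity
          nlinarith [hc0 k, hc1 k]
      _ = 1 := h2
  have hsum2 : Summable (fun n => ∑' k, f n k) := by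
    refine Summable.of_nonneg_of_le
      (fun n => tsum_nonneg fun k => hnn n k) (fun n => ?_) ha
    rw [(hrow n).tsum_eq]
    calc a n * _ ≤ a n * 1 := mul_le_mul_of_nonneg_left (hSle n) (ha0 n)
      _ = a n := mul_one _
  have hF : Summable (Function.uncurry f) :=
    (summable_prod_of_nonneg (fun q => hnn q.1 q.2)).mpr
      ⟨fun n => (hrow n).summable, hsum2⟩
  have hFs : Summable (fun q : ℕ×ℕ => f q.2 q.1) := hF.prod_symm
  have hcol : ∀ k, HasSum (fun n => f n k) (thinned a p k * c k) := by
    intro k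
    have hs : Summable (fun n => f n k) := hFs.prod_factor k
    convert hs.hasSum using 1
    rw [thinned, ← tsum_mul_right]
  have main := hFs.hasSum.prod_fiberwise hcol
  convert main using 1
  rw [show (fun q : ℕ×ℕ => f q.2 q.1) = (fun q : ℕ×ℕ => Function.uncurry f q.swap) from rfl]
  rw [← (Equiv.prodComm ℕ ℕ).tsum_eq (fun q : ℕ×ℕ => Function.uncurry f q.swap)]
  simp only [Equiv.prodComm_apply, Prod.swap_swap]
  rw [Summable.tsum_prod' hF fun n => (hrow n).summable]
  exact (tsum_congr fun n => (hrow n).tsum_eq).symm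

lemma thinned_hasSum_one (ha0 : ∀ k, 0 ≤ a k) (ha1 : HasSum a 1)
    (hp0 : 0 ≤ p) (hp1 : p ≤ 1) :
    HasSum (fun k => thinned a p k) 1 := by
  have h := thinned_hasSum ha0 ha1.summable hp0 hp1 (c := fun _ => 1)
    (fun _ => zero_le_one) (fun _ => le_refl 1)
  have hval : (∑' n, a n * ∑ k ∈ range (n+1),
      (n.choose k : ℝ) * p ^ k * (1-p) ^ (n-k) * 1) = 1 := by
    calc (∑' n, a n * ∑ k ∈ range (n+1),
        (n.choose k : ℝ) * p ^ k * (1-p) ^ (n-k) * 1) = ∑' n, a n := by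
          refine tsum_congr fun n => ?_
          have h5 : ∑ k ∈ range (n+1), (n.choose k : ℝ) * p ^ k * (1-p) ^ (n-k) * 1
              = (p + (1-p))^n := by
            rw [← binom_sum n p (1-p)]
            exact Finset.sum_congr rfl fun k _ => by ring
          rw [h5]; norm_num
      _ = 1 := ha1.tsum_eq
  rw [hval] at h
  simpa using h

lemma thinned_hasSum_pow (ha0 : ∀ k, 0 ≤ a k) (ha1 : HasSum a 1)
    (hp0 : 0 ≤ p) (hp1 : p ≤ 1) {s : ℝ} (hs0 : 0 ≤ s) (hs1 : s ≤ 1) :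
    HasSum (fun k => thinned a p k * s ^ k) (pgf a (p*s+1-p)) := by
  have h := thinned_hasSum ha0 ha1.summable hp0 hp1 (c := fun k => s ^ k)
    (fun k => pow_nonneg hs0 k) (fun k => pow_le_one₀ hs0 hs1)
  have hval : (∑' n, a n * ∑ k ∈ range (n+1),
      (n.choose k : ℝ) * p ^ k * (1-p) ^ (n-k) * s ^ k) = pgf a (p*s+1-p) := by
    refine tsum_congr fun n => ?_
    have h5 : ∑ k ∈ range (n+1), (n.choose k : ℝ) * p ^ k * (1-p) ^ (n-k) * s ^ k
        = (p*s + (1-p))^n := by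
      rw [← binom_sum n (p*s) (1-p)]
      exact Finset.sum_congr rfl fun k _ => by rw [mul_pow]; ring
    rw [h5]
    ring_nf
  rw [hval] at h
  exact h

lemma thinned_hasSum_B (ha0 : ∀ k, 0 ≤ a k) (ha1 : HasSum a 1)
    (hp0 : 0 < p) (hp1 : p ≤ 1) {s : ℝ} (hs0 : 0 ≤ s) (hs1 : s ≤ 1) :
    HasSum (fun k => thinned a p k * ((1 - s^(k+1))/((k:ℝ)+1)))
      ((∑' n, a n * ((1-(p*s+1-p)^(n+1))/((n:ℝ)+1))) / p) := by
  have hc0 : ∀ k : ℕ, 0 ≤ (1 - s^(k+1))/((k:ℝ)+1) := fun k =>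
    div_nonneg (by have := pow_le_one₀ hs0 hs1 (n := k+1); linarith) (by positivity)
  have hc1 : ∀ k : ℕ, (1 - s^(k+1))/((k:ℝ)+1) ≤ 1 := fun k => by
    rw [div_le_one (by positivity : (0:ℝ) < (k:ℝ)+1)]
    have := pow_nonneg hs0 (k+1)
    have hk : (1:ℝ) ≤ (k:ℝ)+1 := by have := Nat.cast_nonneg (α:=ℝ) k; linarith
    linarith
  have h := thinned_hasSum ha0 ha1.summable hp0.le hp1 hc0 hc1
  have hval : (∑' n, a n * ∑ k ∈ range (n+1),
      (n.choose k : ℝ) * p ^ k * (1-p) ^ (n-k) * ((1 - s^(k+1))/((k:ℝ)+1)))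
      = (∑' n, a n * ((1-(p*s+1-p)^(n+1))/((n:ℝ)+1))) / p := by
    rw [← tsum_div_const]
    refine tsum_congr fun n => ?_
    rw [B3 n hp0.ne']
    have hn : ((n:ℝ)+1) ≠ 0 := by positivity
    field_simp
  rw [hval] at h
  exact h

/-! ### Exact algebraic form of the expansion -/

lemma main_algebra {w u p m₁ m₂ m₃ pc D E T S qq : ℝ}
    (hw : w ≠ 0) (hp : p ≠ 0) (hm : m₁ ≠ 0) (hqq : qq = 1 - w)
    (hu : u = p * w) (hpc : pc = 1 / m₁)
    (hT : T = u - m₁/2*u^2 + E)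
    (hfix : w = m₁*u - m₂/2*u^2 + D)
    (hS : (1+qq)*S = ((1 - qq*qq) - 2*(T/p))/w) :
    ((1+qq)*S - m₁*(p-pc) + 1/2*w*p^2*m₂ - 1/6*w^2*(p^3*m₃+p^2*m₂))/w^2
      = 1/2*p^2*m₂ + (D/u^3)*p^3*qq - 2*(E/u^3)*p^2 - 1/6*(p^3*m₃+p^2*m₂) := by
  subst hqq
  have hu0 : u ≠ 0 := by rw [hu]; exact mul_ne_zero hp hw
  have hD : D = w - m₁*u + m₂/2*u^2 := by linarith
  subst hpc hT hD hu
  rw [hS]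
  field_simp
  ring

end SpeedAux

open SpeedAux Finset in
set_option maxHeartbeats 2000000 in
/-- As `p ↓ p_c`, the expansion
`(1 + q_p)v(p) = m₁(p - p_c) - (1/2)(1 - q_p)p²m₂ + (1/6)(1 - q_p)²(p³m₃ + p²m₂) + o((1 - q_p)²)`
holds. -/
theorem speed_expansion
    (a : ℕ → ℝ) (m₁ m₂ m₃ pc : ℝ) (q : ℝ → ℝ)
    (ha0 : ∀ k, 0 ≤ a k) (ha1 : HasSum a 1)
    (hm1 : HasSum (fun k : ℕ => (k : ℝ) * a k) m₁) (h1m : 1 < m₁)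
    (hm2 : HasSum (fun k : ℕ => (k : ℝ) * ((k : ℝ) - 1) * a k) m₂)
    (hm3 : HasSum (fun k : ℕ => (k : ℝ) * ((k : ℝ) - 1) * ((k : ℝ) - 2) * a k) m₃)
    (hpc : pc = 1 / m₁)
    (hq : ∀ p ∈ Set.Ioc pc 1, q p ∈ Set.Ico (0 : ℝ) 1 ∧ pgfp a p (q p) = q p) :
    Tendsto
      (fun p =>
        ((1 + q p) * speedLPP a q p - m₁ * (p - pc)
            + (1 / 2) * (1 - q p) * p ^ 2 * m₂
            - (1 / 6) * (1 - q p) ^ 2 * (p ^ 3 * m₃ + p ^ 2 * m₂)) / (1 - q p) ^ 2)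
      (𝓝[>] pc) (𝓝 0) := by
  have hm1pos : (0:ℝ) < m₁ := lt_trans one_pos h1m
  have hm1ne : m₁ ≠ 0 := hm1pos.ne'
  have hpc0 : 0 < pc := by rw [hpc]; positivity
  have hpc1 : pc < 1 := by rw [hpc]; exact (div_lt_one hm1pos).mpr h1m
  obtain ⟨N, hN2, hNpos⟩ : ∃ N : ℕ, 2 ≤ N ∧ 0 < a N := by
    by_contra hcon
    push_neg at hcon
    have hle : ∀ k : ℕ, (k:ℝ) * a k ≤ a k := by
      intro k
      rcases Nat.lt_or_ge k 2 with hk|hk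
      · interval_cases k
        · simpa using ha0 0
        · simp
      · have h0 : a k = 0 := le_antisymm (hcon k hk) (ha0 k)
        simp [h0]
    have := hasSum_le hle hm1 ha1
    linarith
  -- Step 1: `q p → 1` as `p ↓ pc`.
  have hqlim : Tendsto q (𝓝[>] pc) (𝓝 1) := by
    rw [Metric.tendsto_nhds]
    intro ε hε
    set w₀ : ℝ := min ε 1 with hw₀
    have hw₀pos : 0 < w₀ := lt_min hε one_pos
    have hw₀1 : w₀ ≤ 1 := min_le_right _ _
    set δ : ℝ := a N * pc^2 * w₀^2 / m₁ with hδ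
    have hδpos : 0 < δ := by positivity
    have hmem : Ioo pc (min 1 (pc + δ)) ∈ 𝓝[>] pc :=
      Ioo_mem_nhdsGT_of_mem ⟨le_refl pc, lt_min hpc1 (by linarith)⟩
    filter_upwards [hmem] with p hp
    have hp1 : p ≤ 1 := le_of_lt (lt_of_lt_of_le hp.2 (min_le_left _ _))
    have hpδ : p < pc + δ := lt_of_lt_of_le hp.2 (min_le_right _ _)
    obtain ⟨hq01, hfixp⟩ := hq p ⟨hp.1, hp1⟩
    have hw0 : 0 < 1 - q p := by have := hq01.2; linarith
    have hw1 : 1 - q p ≤ 1 := by have := hq01.1; linarith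
    have hp0 : 0 < p := lt_trans hpc0 hp.1
    rw [Real.dist_eq, abs_of_nonpos (by linarith [hq01.2] : q p - 1 ≤ 0)]
    by_contra hcon2
    push_neg at hcon2
    have hww : w₀ ≤ 1 - q p := le_trans (min_le_left _ _) (by linarith)
    have hu0 : 0 < p * (1 - q p) := mul_pos hp0 hw0
    have hu1 : p * (1 - q p) ≤ 1 := by nlinarith
    have harg : p * q p + 1 - p = 1 - p * (1 - q p) := by ring
    have hfix2 : pgf a (1 - p * (1 - q p)) = q p := by
      rw [← harg]; exact hfixp
    have hsummg : Summable (fun n => a n * (1 - p * (1 - q p))^n) := by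
      refine Summable.of_nonneg_of_le
        (fun n => mul_nonneg (ha0 n) (pow_nonneg (by linarith) n))
        (fun n => ?_) ha1.summable
      have := pow_le_one'' n (u := p * (1 - q p)) hu0.le hu1
      nlinarith [ha0 n]
    have hgsum : HasSum (fun n => a n * (1 - p * (1 - q p))^n)
        (pgf a (1 - p * (1 - q p))) := hsummg.hasSum
    have hF : HasSum (fun n => a n * (1 - (1 - p * (1 - q p))^n)) (1 - q p) := by
      have h := ha1.sub hgsum
      rw [hfix2] at h
      convert h using 1
      · rfl
      funext n; ring
    have hGle : ∀ n, a n * (1 - (1 - p * (1 - q p))^n)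
        ≤ (n:ℝ) * a n * (p * (1 - q p)) - (if n = N then a N * (p * (1 - q p))^2 else 0) := by
      intro n
      by_cases hn : n = N
      · subst hn
        simp only [if_pos rfl]
        obtain ⟨M, hM⟩ : ∃ M, n = M + 2 := ⟨n - 2, by omega⟩
        have hd := d_ge_sq M (u := p * (1 - q p)) hu0.le hu1
        rw [hM]
        push_cast
        rw [hM] at hNpos
        push_cast at hd
        nlinarith [hNpos]
      · simp only [if_neg hn, sub_zero]
        have := c_le n (u := p * (1 - q p)) hu0.le hu1
        nlinarith [ha0 n]
    have hGsum : HasSum (fun n : ℕ => (n:ℝ) * a n * (p * (1 - q p))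
          - (if n = N then a N * (p * (1 - q p))^2 else 0))
        (m₁ * (p * (1 - q p)) - a N * (p * (1 - q p))^2) :=
      (hm1.mul_right _).sub (hasSum_ite_eq N (a N * (p * (1 - q p))^2))
    have hmain : 1 - q p ≤ m₁ * (p * (1 - q p)) - a N * (p * (1 - q p))^2 :=
      hasSum_le hGle hF hGsum
    have h2 : m₁ * p - 1 = m₁ * (p - pc) := by rw [hpc]; field_simp
    have h3 : m₁ * (p - pc) < m₁ * δ := by
      apply mul_lt_mul_of_pos_left _ hm1pos
      linarith
    have h5 : m₁ * δ = a N * pc^2 * w₀^2 := by rw [hδ]; field_simp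
    have h4 : a N * pc^2 * w₀^2 ≤ a N * (p * (1 - q p))^2 := by
      have hpcw : pc * w₀ ≤ p * (1 - q p) := mul_le_mul hp.1.le hww hw₀pos.le hp0.le
      have hpcw0 : 0 ≤ pc * w₀ := mul_nonneg hpc0.le hw₀pos.le
      have hsq : (pc*w₀)^2 ≤ (p*(1 - q p))^2 := pow_le_pow_left₀ hpcw0 hpcw 2
      calc a N * pc^2 * w₀^2 = a N * (pc*w₀)^2 := by ring
        _ ≤ a N * (p*(1 - q p))^2 := mul_le_mul_of_nonneg_left hsq hNpos.le
    have h6 : a N * (p * (1 - q p))^2 ≤ (1 - q p) * (m₁ * p - 1) := by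
      have hbr3 : (1 - q p)*(m₁*p - 1) = m₁*(p*(1 - q p)) - (1 - q p) := by ring
      linarith [hmain, hbr3]
    have h7 : (1 - q p) * (m₁ * p - 1) ≤ m₁ * p - 1 := by
      have hmpc : m₁ * pc = 1 := by rw [hpc]; field_simp
      have hlt := mul_lt_mul_of_pos_left hp.1 hm1pos
      have hpos : 0 ≤ m₁ * p - 1 := by linarith
      calc (1 - q p) * (m₁ * p - 1) ≤ 1 * (m₁ * p - 1) :=
            mul_le_mul_of_nonneg_right hw1 hpos
        _ = m₁ * p - 1 := one_mul _
    linarith [h6, h7, h4, h3, h5, h2]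
  -- Step 2: limits of the remainder ratios along `p ↓ pc`.
  have hwlim : Tendsto (fun p => 1 - q p) (𝓝[>] pc) (𝓝 0) := by
    have h := (tendsto_const_nhds (x := (1:ℝ)) (f := 𝓝[>] pc)).sub hqlim
    simpa using h
  have hplim : Tendsto (fun p : ℝ => p) (𝓝[>] pc) (𝓝 pc) :=
    tendsto_id.mono_left nhdsWithin_le_nhds
  have hmemIoo : Ioo pc 1 ∈ 𝓝[>] pc := Ioo_mem_nhdsGT_of_mem ⟨le_refl pc, hpc1⟩
  have hbundle : ∀ᶠ p in 𝓝[>] pc,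
      0 < p ∧ p ≤ 1 ∧ 0 ≤ q p ∧ q p < 1 ∧ pgfp a p (q p) = q p := by
    filter_upwards [hmemIoo] with p hp
    obtain ⟨h01, hfixp⟩ := hq p ⟨hp.1, hp.2.le⟩
    exact ⟨lt_trans hpc0 hp.1, hp.2.le, h01.1, h01.2, hfixp⟩
  have hulim : Tendsto (fun p => p * (1 - q p)) (𝓝[>] pc) (𝓝[>] 0) := by
    rw [tendsto_nhdsWithin_iff]
    constructor
    · have h := hplim.mul hwlim
      simpa using h
    · filter_upwards [hbundle] with p hp
      exact mul_pos hp.1 (by linarith [hp.2.2.2.1])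
  have hDlim : Tendsto (fun p => (∑' k : ℕ, a k * eF k (p * (1 - q p))) / (p * (1 - q p))^3)
      (𝓝[>] pc) (𝓝 (m₃/6)) := (D_lim ha0 hm3).comp hulim
  have hElim : Tendsto
      (fun p => (∑' k : ℕ, a k * eF (k+1) (p * (1 - q p)) / ((k:ℝ)+1)) / (p * (1 - q p))^3)
      (𝓝[>] pc) (𝓝 (m₂/6)) := (E_lim ha0 hm2).comp hulim
  -- Step 3: limit of the exact algebraic expression.
  have hGlim : Tendsto (fun p =>
        1/2*p^2*m₂
        + ((∑' k : ℕ, a k * eF k (p * (1 - q p))) / (p * (1 - q p))^3)*p^3*(q p)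
        - 2*((∑' k : ℕ, a k * eF (k+1) (p * (1 - q p)) / ((k:ℝ)+1)) / (p * (1 - q p))^3)*p^2
        - 1/6*(p^3*m₃+p^2*m₂))
      (𝓝[>] pc) (𝓝 0) := by
    have t1 : Tendsto (fun p : ℝ => 1/2*p^2*m₂) (𝓝[>] pc) (𝓝 (1/2*pc^2*m₂)) :=
      (tendsto_const_nhds.mul (hplim.pow 2)).mul tendsto_const_nhds
    have t2 : Tendsto (fun p : ℝ =>
        ((∑' k : ℕ, a k * eF k (p * (1 - q p))) / (p * (1 - q p))^3)*p^3*(q p))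
        (𝓝[>] pc) (𝓝 ((m₃/6)*pc^3*1)) :=
      (hDlim.mul (hplim.pow 3)).mul hqlim
    have t3 : Tendsto (fun p : ℝ =>
        2*((∑' k : ℕ, a k * eF (k+1) (p * (1 - q p)) / ((k:ℝ)+1)) / (p * (1 - q p))^3)*p^2)
        (𝓝[>] pc) (𝓝 (2*(m₂/6)*pc^2)) :=
      (tendsto_const_nhds.mul hElim).mul (hplim.pow 2)
    have t4 : Tendsto (fun p : ℝ => 1/6*(p^3*m₃+p^2*m₂))
        (𝓝[>] pc) (𝓝 (1/6*(pc^3*m₃+pc^2*m₂))) :=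
      tendsto_const_nhds.mul (((hplim.pow 3).mul tendsto_const_nhds).add
        ((hplim.pow 2).mul tendsto_const_nhds))
    have h := ((t1.add t2).sub t3).sub t4
    rw [show 1/2*pc^2*m₂ + (m₃/6)*pc^3*(1:ℝ) - 2*(m₂/6)*pc^2 - 1/6*(pc^3*m₃+pc^2*m₂)
        = (0:ℝ) from by ring] at h
    exact h
  -- Step 4: the target coincides with the exact expression near `pc`.
  refine hGlim.congr' ?_
  filter_upwards [hbundle] with p hp
  obtain ⟨hp0, hp1, hq0, hq1, hfixp⟩ := hp
  have hppos : (0:ℝ) < p := hp0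
  have hw0 : 0 < 1 - q p := by linarith
  have hu0 : 0 < p * (1 - q p) := mul_pos hp0 hw0
  have hu1 : p * (1 - q p) ≤ 1 := by nlinarith
  have harg : p * q p + 1 - p = 1 - p * (1 - q p) := by ring
  have hfix2 : pgf a (1 - p * (1 - q p)) = q p := by rw [← harg]; exact hfixp
  -- the speed identity
  have h1 := thinned_hasSum_one (a := a) (p := p) ha0 ha1 hp0.le hp1
  have h2 := thinned_hasSum_pow (a := a) (p := p) ha0 ha1 hp0.le hp1 hq0 hq1.le
  have h3 := thinned_hasSum_B (a := a) (p := p) ha0 ha1 hp0 hp1 hq0 hq1.le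
  rw [show p * q p + 1 - p = 1 - p * (1 - q p) from by ring] at h3
  have hA : HasSum (fun k => thinned a p k * (1 - q p ^ (k+1))) (1 - q p * q p) := by
    have h := h1.sub (h2.mul_right (q p))
    rw [show p * q p + 1 - p = 1 - p * (1 - q p) from by ring, hfix2] at h
    convert h using 1
    · rfl
    funext k; ring
  have hq2ne : (1:ℝ) - q p ^ 2 ≠ 0 := by nlinarith
  have hwne : (1:ℝ) - q p ≠ 0 := hw0.ne'
  have hC := (hA.sub (h3.mul_left 2)).div_const (1 - q p ^ 2)
  have hspeed : speedLPP a q p =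
      ((1 - q p * q p)
        - 2*((∑' n : ℕ, a n * ((1-(1 - p * (1 - q p))^(n+1))/((n:ℝ)+1)))/p)) / (1 - q p ^ 2) := by
    rw [speedLPP, ← hC.tsum_eq]
    refine tsum_congr fun k => ?_
    have hk1 : ((k:ℝ)+1) ≠ 0 := by positivity
    field_simp
    ring
  have hS : (1 + q p) * speedLPP a q p =
      ((1 - q p * q p)
        - 2*((∑' n : ℕ, a n * ((1-(1 - p * (1 - q p))^(n+1))/((n:ℝ)+1)))/p)) / (1 - q p) := by
    rw [hspeed]
    rw [show (1:ℝ) - q p ^ 2 = (1 - q p) * (1 + q p) from by ring]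
    have h1q : (1:ℝ) + q p ≠ 0 := by positivity
    field_simp
  -- the two expansions
  have hTsum := pgf_int_expand (a := a) ha0 ha1 hm1 hm2 hu0.le hu1
  have hT : (∑' n : ℕ, a n * ((1-(1 - p * (1 - q p))^(n+1))/((n:ℝ)+1)))
      = p * (1 - q p) - m₁/2*(p * (1 - q p))^2
        + ∑' n : ℕ, a n * eF (n+1) (p * (1 - q p)) / ((n:ℝ)+1) := hTsum.tsum_eq
  have hDsum := pgf_expand (a := a) ha0 ha1 hm1 hm2 hm3 hu0.le hu1
  have hfix3 : 1 - q p = m₁*(p * (1 - q p)) - m₂/2*(p * (1 - q p))^2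
      + ∑' k : ℕ, a k * eF k (p * (1 - q p)) := by
    have hv : pgf a (1 - p * (1 - q p))
        = 1 - m₁ * (p * (1 - q p)) + m₂ / 2 * (p * (1 - q p)) ^ 2
          - ∑' k : ℕ, a k * eF k (p * (1 - q p)) := hDsum.tsum_eq
    rw [hfix2] at hv
    linarith
  exact (main_algebra (S := speedLPP a q p) hwne hp0.ne' hm1ne
    (by ring) rfl hpc hT hfix3 hS).symm
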